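/- Let μ > 0, σ > 0, M > 1, and ε ∈ (−1, 0), and suppose σ_in = σ_out = σ. Then the difference of expected activation movements E_out[z̄ − z] − E_in[z̄ − z] is strictly negative, where E_in[z̄−z] = μ[Φ(μ√M/σ) − Φ(μ/σ)] + σ[(1/√M)φ(μ√M/σ) − φ(−μ/σ)] and E_out[z̄−z] = (4εσ/√(2π))(1 − 1/√M) + (1+ε)μ[Φ(μ√M/((1+ε)σ)) − Φ(μ/((1+ε)σ))] + (1+ε)²σ[(1/√M)φ(μ√M/((1+ε)σ)) − φ(μ/((1+ε)σ))]. -/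

import Mathlib

open Real MeasureTheory

open Set

noncomputable def stdPdf (t : ℝ) : ℝ := Real.exp (-t^2/2) / Real.sqrt (2*Real.pi)

noncomputable def stdCdf (x : ℝ) : ℝ := ∫ t in Set.Iic x, stdPdf t

lemma stdPdf_pos (t : ℝ) : 0 < stdPdf t := by
  unfold stdPdf
  positivity

lemma continuous_stdPdf : Continuous stdPdf := by
  unfold stdPdf
  fun_prop

lemma integrable_stdPdf : Integrable stdPdf := by
  have h : Integrable (fun t : ℝ => Real.exp (-(1/2) * t^2)) :=
    integrable_exp_neg_mul_sq (by norm_num)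
  have := h.div_const (Real.sqrt (2*Real.pi))
  convert this using 2 with t
  · unfold stdPdf; ring_nf

lemma hasDerivAt_stdCdf (x : ℝ) : HasDerivAt stdCdf (stdPdf x) x := by
  have heq : ∀ y : ℝ, stdCdf y = stdCdf 0 + ∫ t in (0:ℝ)..y, stdPdf t := by
    intro y
    unfold stdCdf
    rw [intervalIntegral.integral_Iic_sub_Iic (integrable_stdPdf.integrableOn)
      (integrable_stdPdf.integrableOn) |>.symm]
    ring
  have hd : HasDerivAt (fun y => stdCdf 0 + ∫ t in (0:ℝ)..y, stdPdf t) (stdPdf x) x := by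
    have h2 : HasDerivAt (fun y => ∫ t in (0:ℝ)..y, stdPdf t) (stdPdf x) x :=
      intervalIntegral.integral_hasDerivAt_right
        (integrable_stdPdf.intervalIntegrable)
        (continuous_stdPdf.aestronglyMeasurable.stronglyMeasurableAtFilter)
        continuous_stdPdf.continuousAt
    exact ((hasDerivAt_const x (stdCdf 0)).add h2).congr_deriv (zero_add _)
  exact hd.congr_of_eventuallyEq (Filter.Eventually.of_forall fun y => (heq y))

lemma hasDerivAt_stdPdf (u : ℝ) : HasDerivAt stdPdf (-u * stdPdf u) u := by
  have h1 : HasDerivAt (fun t : ℝ => -t^2/2) (-u) u := by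
    have := ((hasDerivAt_pow 2 u).neg).div_const 2
    convert this using 1
    any_goals rfl
    push_cast; ring
  have h2 := (h1.exp).div_const (Real.sqrt (2*Real.pi))
  convert h2 using 1
  any_goals rfl
  unfold stdPdf; ring

lemma key_bound (u : ℝ) : (2 + u^2) * stdPdf u ≤ 2 * stdPdf 0 := by
  have hs : 0 < Real.sqrt (2*Real.pi) := Real.sqrt_pos.mpr (by positivity)
  have h1 : u^2/2 + 1 ≤ Real.exp (u^2/2) := Real.add_one_le_exp _
  have h2 : (2 + u^2) * Real.exp (-u^2/2) ≤ 2 := by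
    rw [show -u^2/2 = -(u^2/2) by ring, Real.exp_neg]
    rw [mul_inv_le_iff₀ (Real.exp_pos _)]
    nlinarith [Real.exp_pos (u^2/2)]
  unfold stdPdf
  have : rexp (-0^2/2) = 1 := by norm_num
  rw [this, ← mul_div_assoc, ← mul_div_assoc, div_le_div_iff_of_pos_right hs]
  simpa [mul_comm] using h2

lemma hasDerivAt_psi (x t : ℝ) (ht : t ≠ 0) :
    HasDerivAt (fun t => t^2 * stdPdf (x/t)) ((2*t + x^2/t) * stdPdf (x/t)) t := by
  have hinner : HasDerivAt (fun t : ℝ => x/t) (-x/t^2) t := by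
    simpa [div_eq_mul_inv] using (hasDerivAt_inv ht).const_mul x
  have houter := (hasDerivAt_stdPdf (x/t)).comp t hinner
  have hpow : HasDerivAt (fun t : ℝ => t^2) (2*t) t := by
    simpa using hasDerivAt_pow 2 t
  have := hpow.mul houter
  convert this using 1
  any_goals rfl
  simp only [Function.comp_apply, id_eq]
  field_simp

lemma mvt_bound {x k : ℝ} (hx : 0 < x) (hk : 0 < k) (hk1 : k < 1) :
    stdPdf x - k^2 * stdPdf (x/k) ≤ 2*(1-k)*stdPdf 0 := by
  set ψ : ℝ → ℝ := fun t => t^2 * stdPdf (x/t) with hψ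
  have hd : ∀ t ∈ Ioo k 1, HasDerivAt ψ ((2*t + x^2/t) * stdPdf (x/t)) t :=
    fun t ht => hasDerivAt_psi x t (ne_of_gt (lt_trans hk ht.1))
  have hcont : ContinuousOn ψ (Icc k 1) := by
    intro t ht
    exact (hasDerivAt_psi x t (ne_of_gt (lt_of_lt_of_le hk ht.1))).continuousAt.continuousWithinAt
  obtain ⟨c, hc, hceq⟩ := exists_hasDerivAt_eq_slope ψ (fun t => (2*t + x^2/t) * stdPdf (x/t))
    hk1 hcont hd
  have hc0 : 0 < c := lt_trans hk hc.1
  have hb : (2*c + x^2/c) * stdPdf (x/c) ≤ 2 * stdPdf 0 := by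
    have h1 : (2*c + x^2/c) * stdPdf (x/c) = c * ((2 + (x/c)^2) * stdPdf (x/c)) := by
      field_simp
    rw [h1]
    calc c * ((2 + (x/c)^2) * stdPdf (x/c)) ≤ 1 * ((2 + (x/c)^2) * stdPdf (x/c)) := by
          apply mul_le_mul_of_nonneg_right (le_of_lt hc.2)
          have := (stdPdf_pos (x/c)).le
          positivity
      _ = (2 + (x/c)^2) * stdPdf (x/c) := one_mul _
      _ ≤ 2 * stdPdf 0 := key_bound _
  have hψ1 : ψ 1 = stdPdf x := by simp [hψ]
  have hψk : ψ k = k^2 * stdPdf (x/k) := rfl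
  have : ψ 1 - ψ k = (2*c + x^2/c) * stdPdf (x/c) * (1 - k) := by
    rw [hceq]
    field_simp
    rw [mul_div_assoc, div_self (by linarith : (1:ℝ) - k ≠ 0), mul_one]
  rw [← hψ1, ← hψk, this]
  have h1k : (0:ℝ) ≤ 1 - k := by linarith
  calc (2*c + x^2/c) * stdPdf (x/c) * (1-k) ≤ 2 * stdPdf 0 * (1-k) :=
        mul_le_mul_of_nonneg_right hb h1k
    _ = 2*(1-k)*stdPdf 0 := by ring

lemma hasDerivAt_gpart (μ c v : ℝ) (hc : c ≠ 0) (hv : v ≠ 0) :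
    HasDerivAt (fun v => c*μ*stdCdf (μ/(c*v)) + c^2*v*stdPdf (μ/(c*v)))
      (c^2 * stdPdf (μ/(c*v))) v := by
  have hinner : HasDerivAt (fun v : ℝ => μ/(c*v)) (-(μ/c)/v^2) v := by
    have h := (hasDerivAt_inv hv).const_mul (μ/c)
    have heq : (fun v : ℝ => μ/c * v⁻¹) = fun v : ℝ => μ/(c*v) := by
      funext t; field_simp
    rw [heq] at h
    convert h using 1
    any_goals rfl
    field_simp
  have h1 := ((hasDerivAt_stdCdf (μ/(c*v))).comp v hinner).const_mul (c*μ)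
  have h2 := ((hasDerivAt_id v).const_mul (c^2)).mul ((hasDerivAt_stdPdf (μ/(c*v))).comp v hinner)
  have := h1.add h2
  convert this using 1
  any_goals rfl
  simp only [Function.comp_apply, id_eq]
  field_simp
  ring

theorem movement_difference_neg (μ σ ε : ℝ) (M : ℝ) (hμ : 0 < μ) (hσ : 0 < σ)
    (hM : 1 < M) (hε : ε ∈ Set.Ioo (-1 : ℝ) 0) :
    ((4*ε*σ/Real.sqrt (2*Real.pi)) * (1 - 1/Real.sqrt M)
      + (1+ε)*μ * (stdCdf (μ*Real.sqrt M/((1+ε)*σ)) - stdCdf (μ/((1+ε)*σ)))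
      + (1+ε)^2*σ * ((1/Real.sqrt M) * stdPdf (μ*Real.sqrt M/((1+ε)*σ))
          - stdPdf (μ/((1+ε)*σ))))
    - (μ * (stdCdf (μ*Real.sqrt M/σ) - stdCdf (μ/σ))
      + σ * ((1/Real.sqrt M) * stdPdf (μ*Real.sqrt M/σ) - stdPdf (-μ/σ))) < 0 := by
  obtain ⟨hε1, hε2⟩ := hε
  have hk : 0 < 1 + ε := by linarith
  have hk1 : 1 + ε < 1 := by linarith
  have hs : 1 < Real.sqrt M := by
    have := Real.sqrt_lt_sqrt (by norm_num) hM
    rwa [Real.sqrt_one] at this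
  have hs0 : 0 < Real.sqrt M := by linarith
  set W : ℝ → ℝ := fun v =>
    ((1+ε)*μ*stdCdf (μ/((1+ε)*v)) + (1+ε)^2*v*stdPdf (μ/((1+ε)*v)))
    - ((1:ℝ)*μ*stdCdf (μ/(1*v)) + (1:ℝ)^2*v*stdPdf (μ/(1*v)))
    + 4*(-ε)*stdPdf 0*v with hW
  have hWd : ∀ v : ℝ, 0 < v → HasDerivAt W
      ((1+ε)^2 * stdPdf (μ/((1+ε)*v)) - stdPdf (μ/(1*v)) + 4*(-ε)*stdPdf 0) v := by
    intro v hv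
    have h1 := hasDerivAt_gpart μ (1+ε) v (ne_of_gt hk) (ne_of_gt hv)
    have h2 := hasDerivAt_gpart μ 1 v (by norm_num) (ne_of_gt hv)
    have h3 : HasDerivAt (fun v : ℝ => 4*(-ε)*stdPdf 0*v) (4*(-ε)*stdPdf 0) v := by
      simpa using (hasDerivAt_id v).const_mul (4*(-ε)*stdPdf 0)
    have := (h1.sub h2).add h3
    convert this using 1
    any_goals rfl
    simp
  have hmono : StrictMonoOn W (Set.Ioi 0) := by
    apply strictMonoOn_of_deriv_pos (convex_Ioi 0)
    · exact fun v hv => (hWd v hv).continuousAt.continuousWithinAt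
    · intro v hv
      rw [interior_Ioi] at hv
      rw [(hWd v hv).deriv]
      have hx : 0 < μ / v := div_pos hμ hv
      have hb := mvt_bound hx hk hk1
      have harg : μ / v / (1+ε) = μ/((1+ε)*v) := by
        field_simp
      rw [harg] at hb
      have h0 := stdPdf_pos 0
      have h1 : μ/(1*v) = μ/v := by ring_nf
      rw [h1]
      nlinarith
  have hfrac : σ / Real.sqrt M ∈ Set.Ioi (0:ℝ) := Set.mem_Ioi.mpr (by positivity)
  have hlt : W (σ / Real.sqrt M) < W σ := by
    apply hmono hfrac (Set.mem_Ioi.mpr hσ)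
    rw [div_lt_iff₀ hs0]
    nlinarith
  have h0 : stdPdf 0 = 1 / Real.sqrt (2*Real.pi) := by
    unfold stdPdf; norm_num
  have e1 : μ/((1+ε)*(σ/Real.sqrt M)) = μ*Real.sqrt M/((1+ε)*σ) := by
    field_simp
  have e2 : μ/(1*(σ/Real.sqrt M)) = μ*Real.sqrt M/σ := by
    field_simp
  have e3 : μ/(1*σ) = μ/σ := by ring_nf
  have e4 : stdPdf (-μ/σ) = stdPdf (μ/σ) := by
    unfold stdPdf; ring_nf
  have hfin : ((4*ε*σ/Real.sqrt (2*Real.pi)) * (1 - 1/Real.sqrt M)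
      + (1+ε)*μ * (stdCdf (μ*Real.sqrt M/((1+ε)*σ)) - stdCdf (μ/((1+ε)*σ)))
      + (1+ε)^2*σ * ((1/Real.sqrt M) * stdPdf (μ*Real.sqrt M/((1+ε)*σ))
          - stdPdf (μ/((1+ε)*σ))))
    - (μ * (stdCdf (μ*Real.sqrt M/σ) - stdCdf (μ/σ))
      + σ * ((1/Real.sqrt M) * stdPdf (μ*Real.sqrt M/σ) - stdPdf (-μ/σ)))
      = W (σ/Real.sqrt M) - W σ := by
    rw [hW, e4, h0]
    simp only [e1, e2, e3]
    have hsne : Real.sqrt M ≠ 0 := ne_of_gt hs0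
    field_simp
    ring
  linarith [hfin ▸ sub_neg.mpr hlt]
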